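/- Let n ≥ 1 and suppose z_1,…,z_n : I → ℝ are twice differentiable on an open interval I, pairwise distinct with pairwise distinct squares, avoid ±1,…,±n, and satisfy the first-order system z_ℓ′ = ∏_{j=1}^n (j² − z_ℓ²)/∏_{j≠ℓ} (z_j² − z_ℓ²) for all ℓ. Then they satisfy the Ruijsenaars–Schneider-type second-order system z_ℓ″ + 2 z_ℓ z_ℓ′ = ∑_{j≠ℓ} 2 z_ℓ′ z_j′/(z_ℓ − z_j) for all ℓ. -/

import Mathlib

open Finset

section AuxiliaryLemmas

open Polynomial

lemma derivative_finset_prod' {ι : Type*} [DecidableEq ι] (t : Finset ι) (f : ι → ℝ[X]) :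
    derivative (∏ i ∈ t, f i) = ∑ i ∈ t, (∏ j ∈ t.erase i, f j) * derivative (f i) := by
  induction t using Finset.induction_on with
  | empty => simp
  | @insert a t ha ih =>
    rw [Finset.prod_insert ha, derivative_mul, ih, Finset.sum_insert ha, Finset.erase_insert ha,
      Finset.mul_sum]
    refine congrArg₂ (· + ·) (mul_comm _ _) (Finset.sum_congr rfl fun i hi => ?_)
    rw [← mul_assoc]
    congr 1
    rw [Finset.erase_insert_of_ne (by rintro rfl; exact ha hi), Finset.prod_insert
      (fun h => ha (Finset.mem_of_mem_erase h))]

lemma prod_erase_eq_div' {ι : Type*} [DecidableEq ι] (t : Finset ι) (f : ι → ℝ) {b : ι}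
    (hb : b ∈ t) (h : f b ≠ 0) : ∏ a ∈ t.erase b, f a = (∏ a ∈ t, f a) / f b :=
  (eq_div_iff h).mpr (Finset.prod_erase_mul t f hb)

lemma prod_neg' {ι : Type*} (t : Finset ι) (f : ι → ℝ) :
    ∏ i ∈ t, -f i = (-1) ^ t.card * ∏ i ∈ t, f i := by
  rw [← Finset.prod_const, ← Finset.prod_mul_distrib]
  exact Finset.prod_congr rfl fun i _ => (neg_one_mul _).symm

lemma derivative_basisDivisor' (x y : ℝ) :
    derivative (Lagrange.basisDivisor x y) = C (x - y)⁻¹ := by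
  simp [Lagrange.basisDivisor]

lemma star (n : ℕ) (s : Fin n → ℝ) (hs : ∀ j k : Fin n, j ≠ k → s j ≠ s k)
    (ha : ∀ m ∈ Finset.Icc 1 n, ∀ j : Fin n, ((m : ℝ) ^ 2 - s j) ≠ 0) (ℓ : Fin n) :
    (∏ m ∈ Finset.Icc 1 n, ((m : ℝ) ^ 2 - s ℓ)) / (∏ k ∈ Finset.univ.erase ℓ, (s k - s ℓ)) *
        (∑ m ∈ Finset.Icc 1 n, 1 / ((m : ℝ) ^ 2 - s ℓ))
      - (∏ m ∈ Finset.Icc 1 n, ((m : ℝ) ^ 2 - s ℓ)) / (∏ k ∈ Finset.univ.erase ℓ, (s k - s ℓ)) *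
        (∑ j ∈ Finset.univ.erase ℓ, 1 / (s j - s ℓ))
      - ∑ j ∈ Finset.univ.erase ℓ,
          ((∏ m ∈ Finset.Icc 1 n, ((m : ℝ) ^ 2 - s j)) / (∏ k ∈ Finset.univ.erase j, (s k - s j)))
            / (s j - s ℓ) = 1 := by
  classical
  have hn : 0 < n := ℓ.pos
  set P : Fin n → ℝ := fun j => ∏ m ∈ Finset.Icc 1 n, ((m : ℝ) ^ 2 - s j) with hPdef
  set D : Fin n → ℝ := fun j => ∏ k ∈ Finset.univ.erase j, (s k - s j) with hDdef
  have hP0 : ∀ j, P j ≠ 0 := fun j => Finset.prod_ne_zero_iff.mpr fun m hm => ha m hm j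
  have hsub : ∀ j k : Fin n, j ≠ k → s j - s k ≠ 0 := fun j k h => sub_ne_zero_of_ne (hs j k h)
  have hD0 : ∀ j, D j ≠ 0 := fun j =>
    Finset.prod_ne_zero_iff.mpr fun k hk => hsub k j (Finset.mem_erase.mp hk).1
  have hinj : Set.InjOn s (Finset.univ : Finset (Fin n)) := fun j _ k _ h => by
    by_contra hne; exact hs j k hne h
  have hcard : #(Finset.univ : Finset (Fin n)) = n := by simp
  -- the polynomial setup
  set e : ℝ := (-1) ^ n with he
  have he0 : e ≠ 0 := by positivity
  set p : ℝ[X] := ∏ m ∈ Finset.Icc 1 n, (C ((m : ℝ) ^ 2) - X) with hp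
  set N : ℝ[X] := Lagrange.nodal Finset.univ s with hN
  have hpe : p = C e * Lagrange.nodal (Finset.Icc 1 n) (fun m => (m : ℝ) ^ 2) := by
    calc p = ∏ m ∈ Finset.Icc 1 n, (C (-1 : ℝ) * (X - C ((m : ℝ) ^ 2))) :=
          Finset.prod_congr rfl fun m _ => by rw [C_neg, C_1, neg_one_mul, neg_sub]
    _ = (∏ _m ∈ Finset.Icc 1 n, C (-1 : ℝ)) * ∏ m ∈ Finset.Icc 1 n, (X - C ((m : ℝ) ^ 2)) :=
          Finset.prod_mul_distrib
    _ = C e * Lagrange.nodal (Finset.Icc 1 n) (fun m => (m : ℝ) ^ 2) := by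
          rw [Finset.prod_const, Lagrange.nodal_eq, he, ← C_pow]
          norm_num
  have hdegN : (C e * N).degree = n := by
    rw [degree_mul, degree_C he0, zero_add, hN, Lagrange.degree_nodal, hcard]
  have hdegp : p.degree = n := by
    rw [hpe, degree_mul, degree_C he0, zero_add, Lagrange.degree_nodal]
    norm_num
  have hlcp : p.leadingCoeff = e := by
    rw [hpe, leadingCoeff_mul, leadingCoeff_C, (Lagrange.nodal_monic).leadingCoeff, mul_one]
  have hp0 : p ≠ 0 := leadingCoeff_ne_zero.mp (hlcp ▸ he0)
  set q : ℝ[X] := p - C e * N with hq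
  have hdegq : q.degree < n := by
    have := degree_sub_lt (hdegp.trans hdegN.symm) hp0
      (by rw [hlcp, leadingCoeff_mul, leadingCoeff_C, (Lagrange.nodal_monic).leadingCoeff, mul_one])
    rwa [hdegp] at this
  have hqi : q = Lagrange.interpolate Finset.univ s (fun i => P i) := by
    have h2 := Lagrange.eq_interpolate (f := q) hinj (by rw [hcard]; exact hdegq)
    rw [h2]
    refine Lagrange.interpolate_eq_of_values_eq_on _ _ fun i _ => ?_
    rw [hq]
    simp [hN, Lagrange.eval_nodal_at_node (Finset.mem_univ i), hp, eval_prod, hPdef]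
  have hkey : eval (s ℓ) (derivative p)
      = e * eval (s ℓ) (derivative N)
        + eval (s ℓ) (derivative (Lagrange.interpolate Finset.univ s fun i => P i)) := by
    have hpq : p = C e * N + Lagrange.interpolate Finset.univ s (fun i => P i) := by
      rw [← hqi, hq]; ring
    conv_lhs => rw [hpq]
    rw [derivative_add, derivative_C_mul, eval_add, eval_mul, eval_C]
  -- evaluate the three pieces
  have hW : eval (s ℓ) (derivative N) = ∏ k ∈ Finset.univ.erase ℓ, (s ℓ - s k) := by
    rw [hN, Lagrange.eval_nodal_derivative_eval_node_eq (Finset.mem_univ ℓ), Lagrange.eval_nodal]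
  have hPd : eval (s ℓ) (derivative p)
      = -(P ℓ * ∑ m ∈ Finset.Icc 1 n, 1 / ((m : ℝ) ^ 2 - s ℓ)) := by
    rw [hp, derivative_finset_prod', eval_finset_sum]
    have hterm : ∀ m ∈ Finset.Icc 1 n,
        eval (s ℓ) ((∏ m' ∈ (Finset.Icc 1 n).erase m, (C ((m' : ℝ) ^ 2) - X)) *
          derivative (C ((m : ℝ) ^ 2) - X))
        = -(P ℓ * (1 / ((m : ℝ) ^ 2 - s ℓ))) := by
      intro m hm
      rw [derivative_sub, derivative_C, derivative_X, zero_sub]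
      have hev : eval (s ℓ) (∏ m' ∈ (Finset.Icc 1 n).erase m, (C ((m' : ℝ) ^ 2) - X))
          = ∏ m' ∈ (Finset.Icc 1 n).erase m, ((m' : ℝ) ^ 2 - s ℓ) := by
        simp [eval_prod]
      rw [eval_mul, hev, prod_erase_eq_div' _ _ hm (ha m hm ℓ)]
      simp [hPdef]
      ring
    rw [Finset.sum_congr rfl hterm]
    rw [Finset.mul_sum]
    simp
  have hBl : eval (s ℓ) (derivative (Lagrange.basis Finset.univ s ℓ))
      = ∑ k ∈ Finset.univ.erase ℓ, (s ℓ - s k)⁻¹ := by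
    rw [Lagrange.basis, derivative_finset_prod', eval_finset_sum]
    refine Finset.sum_congr rfl fun k hk => ?_
    rw [derivative_basisDivisor', eval_mul, eval_C]
    have h1 : eval (s ℓ)
        (∏ m ∈ (Finset.univ.erase ℓ).erase k, Lagrange.basisDivisor (s ℓ) (s m)) = 1 := by
      rw [eval_prod]
      refine Finset.prod_eq_one fun m hm => ?_
      have hmℓ : m ≠ ℓ := (Finset.mem_erase.mp (Finset.mem_of_mem_erase hm)).1
      simp only [Lagrange.basisDivisor, eval_mul, eval_C, eval_sub, eval_X]
      exact inv_mul_cancel₀ (hsub ℓ m (Ne.symm hmℓ))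
    rw [h1, one_mul]
  have hBj : ∀ j ∈ Finset.univ.erase ℓ,
      eval (s ℓ) (derivative (Lagrange.basis Finset.univ s j))
      = (∏ m ∈ (Finset.univ.erase j).erase ℓ, ((s j - s m)⁻¹ * (s ℓ - s m)))
          * (s j - s ℓ)⁻¹ := by
    intro j hj
    have hjℓ : j ≠ ℓ := (Finset.mem_erase.mp hj).1
    rw [Lagrange.basis, derivative_finset_prod', eval_finset_sum]
    have hzero : ∀ k ∈ Finset.univ.erase j, k ≠ ℓ →
        eval (s ℓ) ((∏ m ∈ ((Finset.univ.erase j).erase k), Lagrange.basisDivisor (s j) (s m)) *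
          derivative (Lagrange.basisDivisor (s j) (s k))) = 0 := by
      intro k hk hkℓ
      rw [eval_mul]
      have h0 : eval (s ℓ)
          (∏ m ∈ ((Finset.univ.erase j).erase k), Lagrange.basisDivisor (s j) (s m)) = 0 := by
        rw [eval_prod]
        refine Finset.prod_eq_zero (i := ℓ)
          (Finset.mem_erase.mpr ⟨Ne.symm hkℓ, Finset.mem_erase.mpr ⟨Ne.symm hjℓ, Finset.mem_univ ℓ⟩⟩) ?_
        simp [Lagrange.basisDivisor]
      rw [h0, zero_mul]
    rw [Finset.sum_eq_single_of_mem ℓ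
      (Finset.mem_erase.mpr ⟨Ne.symm hjℓ, Finset.mem_univ ℓ⟩) hzero]
    rw [derivative_basisDivisor', eval_mul, eval_C, eval_prod]
    congr 1
    refine Finset.prod_congr rfl fun m hm => ?_
    simp [Lagrange.basisDivisor]
  have hI : eval (s ℓ) (derivative (Lagrange.interpolate Finset.univ s fun i => P i))
      = P ℓ * (∑ k ∈ Finset.univ.erase ℓ, (s ℓ - s k)⁻¹)
        + ∑ j ∈ Finset.univ.erase ℓ, P j *
            ((∏ m ∈ (Finset.univ.erase j).erase ℓ, ((s j - s m)⁻¹ * (s ℓ - s m)))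
              * (s j - s ℓ)⁻¹) := by
    rw [Lagrange.interpolate_apply, derivative_sum, eval_finset_sum,
      ← Finset.add_sum_erase _ _ (Finset.mem_univ ℓ)]
    refine congrArg₂ (· + ·) ?_ ?_
    · rw [derivative_C_mul, eval_mul, eval_C, hBl]
    · exact Finset.sum_congr rfl fun j hj => by rw [derivative_C_mul, eval_mul, eval_C, hBj j hj]
  -- assembly
  have hcarde : #(Finset.univ.erase ℓ) = n - 1 := by
    rw [Finset.card_erase_of_mem (Finset.mem_univ ℓ), hcard]
  have hpow : (-1 : ℝ) ^ n = -(-1 : ℝ) ^ (n - 1) := by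
    conv_lhs => rw [← Nat.succ_pred_eq_of_pos hn]
    rw [pow_succ, Nat.pred_eq_sub_one]
    ring
  have hEW : e * (∏ k ∈ Finset.univ.erase ℓ, (s ℓ - s k)) = -D ℓ := by
    have h1 : D ℓ = (-1 : ℝ) ^ (n - 1) * ∏ k ∈ Finset.univ.erase ℓ, (s ℓ - s k) := by
      calc D ℓ = ∏ k ∈ Finset.univ.erase ℓ, -(s ℓ - s k) :=
            Finset.prod_congr rfl fun k _ => by ring
      _ = (-1 : ℝ) ^ (#(Finset.univ.erase ℓ)) * ∏ k ∈ Finset.univ.erase ℓ, (s ℓ - s k) :=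
            prod_neg' _ _
      _ = (-1 : ℝ) ^ (n - 1) * ∏ k ∈ Finset.univ.erase ℓ, (s ℓ - s k) := by rw [hcarde]
    rw [h1, he, hpow]
    ring
  have hC3 : (∑ k ∈ Finset.univ.erase ℓ, (s ℓ - s k)⁻¹)
      = -∑ k ∈ Finset.univ.erase ℓ, 1 / (s k - s ℓ) := by
    rw [← Finset.sum_neg_distrib]
    exact Finset.sum_congr rfl fun k hk => by rw [one_div, ← inv_neg, neg_sub]
  have hC4 : ∀ j ∈ Finset.univ.erase ℓ,
      P j * ((∏ m ∈ (Finset.univ.erase j).erase ℓ, ((s j - s m)⁻¹ * (s ℓ - s m)))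
        * (s j - s ℓ)⁻¹)
      = -(D ℓ * (P j / D j / (s j - s ℓ))) := by
    intro j hj
    have hjℓ : j ≠ ℓ := (Finset.mem_erase.mp hj).1
    have hjl : s j - s ℓ ≠ 0 := hsub j ℓ hjℓ
    have hlj : s ℓ - s j ≠ 0 := hsub ℓ j (Ne.symm hjℓ)
    have hDj : D j = (s ℓ - s j) * ∏ m ∈ (Finset.univ.erase j).erase ℓ, (s m - s j) := by
      rw [hDdef]
      exact (Finset.mul_prod_erase _ _
        (Finset.mem_erase.mpr ⟨Ne.symm hjℓ, Finset.mem_univ ℓ⟩)).symm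
    have hDl2 : D ℓ = (s j - s ℓ) * ∏ m ∈ (Finset.univ.erase j).erase ℓ, (s m - s ℓ) := by
      rw [hDdef]
      simp only
      rw [← Finset.mul_prod_erase _ _ (Finset.mem_erase.mpr ⟨hjℓ, Finset.mem_univ j⟩),
        Finset.erase_right_comm]
    have hB0 : (∏ m ∈ (Finset.univ.erase j).erase ℓ, (s m - s j)) ≠ 0 :=
      Finset.prod_ne_zero_iff.mpr fun m hm =>
        hsub m j (Finset.mem_erase.mp (Finset.mem_of_mem_erase hm)).1
    have hQ : (∏ m ∈ (Finset.univ.erase j).erase ℓ, ((s j - s m)⁻¹ * (s ℓ - s m)))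
        * ∏ m ∈ (Finset.univ.erase j).erase ℓ, (s m - s j)
        = ∏ m ∈ (Finset.univ.erase j).erase ℓ, (s m - s ℓ) := by
      rw [← Finset.prod_mul_distrib]
      refine Finset.prod_congr rfl fun m hm => ?_
      have h1 : s j - s m ≠ 0 := hsub j m
        (Ne.symm (Finset.mem_erase.mp (Finset.mem_of_mem_erase hm)).1)
      field_simp
      ring
    rw [hDl2, hDj,
      show (∏ m ∈ (Finset.univ.erase j).erase ℓ, ((s j - s m)⁻¹ * (s ℓ - s m)))
        = (∏ m ∈ (Finset.univ.erase j).erase ℓ, (s m - s ℓ))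
            / ∏ m ∈ (Finset.univ.erase j).erase ℓ, (s m - s j) from (eq_div_iff hB0).mpr hQ]
    field_simp
    ring
  rw [hPd, hW, hI, hEW, hC3, Finset.sum_congr rfl hC4] at hkey
  simp only [← neg_mul] at hkey
  rw [← Finset.mul_sum] at hkey
  have hD : D ℓ ≠ 0 := hD0 ℓ
  rw [div_mul_eq_mul_div, div_mul_eq_mul_div, div_sub_div_same,
    show (∑ j ∈ Finset.univ.erase ℓ, P j / D j / (s j - s ℓ))
      = (D ℓ * ∑ j ∈ Finset.univ.erase ℓ, P j / D j / (s j - s ℓ)) / D ℓ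
      from (mul_div_cancel_left₀ _ hD).symm,
    div_sub_div_same]
  rw [show P ℓ * (∑ m ∈ Finset.Icc 1 n, 1 / ((m : ℝ) ^ 2 - s ℓ))
      - P ℓ * (∑ j ∈ Finset.univ.erase ℓ, 1 / (s j - s ℓ))
      - D ℓ * ∑ j ∈ Finset.univ.erase ℓ, P j / D j / (s j - s ℓ) = D ℓ by linarith [hkey]]
  exact div_self hD


end AuxiliaryLemmas

/-- twice-differentiable functions `z_1,…,z_n` on an open interval, pairwise
distinct with pairwise distinct squares and avoiding `±1,…,±n`, satisfying the first-order
system `z_ℓ′ = ∏_j (j² − z_ℓ²)/∏_{j≠ℓ}(z_j² − z_ℓ²)`, also satisfy the Ruijsenaars–Schneider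
second-order system `z_ℓ″ + 2 z_ℓ z_ℓ′ = ∑_{j≠ℓ} 2 z_ℓ′ z_j′/(z_ℓ − z_j)`. -/
theorem stmt16 (n : ℕ) (hn : 1 ≤ n) (a b : ℝ) (hab : a < b) (z : Fin n → ℝ → ℝ)
    (hdiff : ∀ j : Fin n, ∀ x ∈ Set.Ioo a b,
      DifferentiableAt ℝ (z j) x ∧ DifferentiableAt ℝ (deriv (z j)) x)
    (hdist : ∀ x ∈ Set.Ioo a b, ∀ j k : Fin n, j ≠ k → z j x ≠ z k x)
    (hdistsq : ∀ x ∈ Set.Ioo a b, ∀ j k : Fin n, j ≠ k → (z j x) ^ 2 ≠ (z k x) ^ 2)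
    (havoid : ∀ x ∈ Set.Ioo a b, ∀ j : Fin n, ∀ ℓ ∈ Finset.Icc 1 n,
      z j x ≠ (ℓ : ℝ) ∧ z j x ≠ -(ℓ : ℝ))
    (hode : ∀ x ∈ Set.Ioo a b, ∀ ℓ : Fin n,
      deriv (z ℓ) x = (∏ j ∈ Finset.Icc 1 n, ((j : ℝ) ^ 2 - (z ℓ x) ^ 2)) /
        ∏ j ∈ Finset.univ.erase ℓ, ((z j x) ^ 2 - (z ℓ x) ^ 2)) :
    ∀ x ∈ Set.Ioo a b, ∀ ℓ : Fin n,
      deriv (deriv (z ℓ)) x + 2 * z ℓ x * deriv (z ℓ) x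
        = ∑ j ∈ Finset.univ.erase ℓ,
            2 * deriv (z ℓ) x * deriv (z j) x / (z ℓ x - z j x) := by
  intro x hx ℓ
  classical
  have hzd : ∀ j : Fin n, HasDerivAt (z j) (deriv (z j) x) x :=
    fun j => ((hdiff j x hx).1).hasDerivAt
  have hsq : ∀ j : Fin n, HasDerivAt (fun y => (z j y) ^ 2)
      (2 * z j x * deriv (z j) x) x := by
    intro j
    have h := (hzd j).pow 2
    norm_num at h
    exact h
  have hsne : ∀ j k : Fin n, j ≠ k → (z j x) ^ 2 - (z k x) ^ 2 ≠ 0 :=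
    fun j k h => sub_ne_zero_of_ne (hdistsq x hx j k h)
  have ham : ∀ m ∈ Finset.Icc 1 n, ∀ j : Fin n, ((m : ℝ) ^ 2 - (z j x) ^ 2) ≠ 0 := by
    intro m hm j
    obtain ⟨h1, h2⟩ := havoid x hx j m hm
    have hf : ((m : ℝ) ^ 2 - (z j x) ^ 2) = ((m : ℝ) - z j x) * ((m : ℝ) + z j x) := by ring
    rw [hf]
    refine mul_ne_zero (sub_ne_zero_of_ne fun h => h1 h.symm) fun h => h2 ?_
    linarith
  have hFx : (∏ m ∈ Finset.Icc 1 n, ((m : ℝ) ^ 2 - (z ℓ x) ^ 2)) ≠ 0 :=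
    Finset.prod_ne_zero_iff.mpr fun m hm => ham m hm ℓ
  have hGx : (∏ k ∈ Finset.univ.erase ℓ, ((z k x) ^ 2 - (z ℓ x) ^ 2)) ≠ 0 :=
    Finset.prod_ne_zero_iff.mpr fun k hk => hsne k ℓ (Finset.mem_erase.mp hk).1
  -- derivatives of the numerator and denominator
  have hFd : HasDerivAt (fun y => ∏ m ∈ Finset.Icc 1 n, ((m : ℝ) ^ 2 - (z ℓ y) ^ 2))
      (∑ m ∈ Finset.Icc 1 n, (∏ m' ∈ (Finset.Icc 1 n).erase m, ((m' : ℝ) ^ 2 - (z ℓ x) ^ 2))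
        * -(2 * z ℓ x * deriv (z ℓ) x)) x := by
    have h := HasDerivAt.fun_finsetProd (x := x) (u := Finset.Icc 1 n)
      (f := fun m y => (m : ℝ) ^ 2 - (z ℓ y) ^ 2)
      (f' := fun _ => -(2 * z ℓ x * deriv (z ℓ) x))
      (fun m _ => HasDerivAt.const_sub ((m : ℝ) ^ 2) (hsq ℓ))
    simpa [smul_eq_mul] using h
  have hGd : HasDerivAt (fun y => ∏ k ∈ Finset.univ.erase ℓ, ((z k y) ^ 2 - (z ℓ y) ^ 2))
      (∑ j ∈ Finset.univ.erase ℓ,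
        (∏ k ∈ (Finset.univ.erase ℓ).erase j, ((z k x) ^ 2 - (z ℓ x) ^ 2))
          * (2 * z j x * deriv (z j) x - 2 * z ℓ x * deriv (z ℓ) x)) x := by
    have h := HasDerivAt.fun_finsetProd (x := x) (u := Finset.univ.erase ℓ)
      (f := fun k y => (z k y) ^ 2 - (z ℓ y) ^ 2)
      (f' := fun k => 2 * z k x * deriv (z k) x - 2 * z ℓ x * deriv (z ℓ) x)
      (fun k _ => (hsq k).sub (hsq ℓ))
    simpa [smul_eq_mul] using h
  have hd2 : deriv (deriv (z ℓ)) x =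
      ((∑ m ∈ Finset.Icc 1 n, (∏ m' ∈ (Finset.Icc 1 n).erase m, ((m' : ℝ) ^ 2 - (z ℓ x) ^ 2))
          * -(2 * z ℓ x * deriv (z ℓ) x))
        * (∏ k ∈ Finset.univ.erase ℓ, ((z k x) ^ 2 - (z ℓ x) ^ 2))
       - (∏ m ∈ Finset.Icc 1 n, ((m : ℝ) ^ 2 - (z ℓ x) ^ 2))
        * (∑ j ∈ Finset.univ.erase ℓ,
            (∏ k ∈ (Finset.univ.erase ℓ).erase j, ((z k x) ^ 2 - (z ℓ x) ^ 2))
              * (2 * z j x * deriv (z j) x - 2 * z ℓ x * deriv (z ℓ) x)))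
      / (∏ k ∈ Finset.univ.erase ℓ, ((z k x) ^ 2 - (z ℓ x) ^ 2)) ^ 2 := by
    have hev : deriv (z ℓ) =ᶠ[nhds x]
        fun y => (∏ m ∈ Finset.Icc 1 n, ((m : ℝ) ^ 2 - (z ℓ y) ^ 2)) /
          ∏ k ∈ Finset.univ.erase ℓ, ((z k y) ^ 2 - (z ℓ y) ^ 2) := by
      filter_upwards [isOpen_Ioo.mem_nhds hx] with y hy
      exact hode y hy ℓ
    rw [hev.deriv_eq]
    exact (hFd.div hGd hGx).deriv
  -- rewrite the two derivative sums in factored form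
  have hF' : (∑ m ∈ Finset.Icc 1 n,
        (∏ m' ∈ (Finset.Icc 1 n).erase m, ((m' : ℝ) ^ 2 - (z ℓ x) ^ 2))
          * -(2 * z ℓ x * deriv (z ℓ) x))
      = (∏ m ∈ Finset.Icc 1 n, ((m : ℝ) ^ 2 - (z ℓ x) ^ 2))
        * (∑ m ∈ Finset.Icc 1 n, 1 / ((m : ℝ) ^ 2 - (z ℓ x) ^ 2))
        * -(2 * z ℓ x * deriv (z ℓ) x) := by
    have h1 : ∀ m ∈ Finset.Icc 1 n,
        (∏ m' ∈ (Finset.Icc 1 n).erase m, ((m' : ℝ) ^ 2 - (z ℓ x) ^ 2))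
          * -(2 * z ℓ x * deriv (z ℓ) x)
        = ((∏ m' ∈ Finset.Icc 1 n, ((m' : ℝ) ^ 2 - (z ℓ x) ^ 2))
            * -(2 * z ℓ x * deriv (z ℓ) x)) * (1 / ((m : ℝ) ^ 2 - (z ℓ x) ^ 2)) := by
      intro m hm
      rw [prod_erase_eq_div' _ _ hm (ham m hm ℓ)]
      ring
    rw [Finset.sum_congr rfl h1, ← Finset.mul_sum]
    ring
  have hG' : (∑ j ∈ Finset.univ.erase ℓ,
        (∏ k ∈ (Finset.univ.erase ℓ).erase j, ((z k x) ^ 2 - (z ℓ x) ^ 2))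
          * (2 * z j x * deriv (z j) x - 2 * z ℓ x * deriv (z ℓ) x))
      = (∏ k ∈ Finset.univ.erase ℓ, ((z k x) ^ 2 - (z ℓ x) ^ 2))
        * (∑ j ∈ Finset.univ.erase ℓ,
            (2 * z j x * deriv (z j) x - 2 * z ℓ x * deriv (z ℓ) x)
              / ((z j x) ^ 2 - (z ℓ x) ^ 2)) := by
    have h1 : ∀ j ∈ Finset.univ.erase ℓ,
        (∏ k ∈ (Finset.univ.erase ℓ).erase j, ((z k x) ^ 2 - (z ℓ x) ^ 2))
          * (2 * z j x * deriv (z j) x - 2 * z ℓ x * deriv (z ℓ) x)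
        = (∏ k ∈ Finset.univ.erase ℓ, ((z k x) ^ 2 - (z ℓ x) ^ 2))
          * ((2 * z j x * deriv (z j) x - 2 * z ℓ x * deriv (z ℓ) x)
              / ((z j x) ^ 2 - (z ℓ x) ^ 2)) := by
      intro j hj
      rw [prod_erase_eq_div' _ _ hj (hsne j ℓ (Finset.mem_erase.mp hj).1)]
      ring
    rw [Finset.sum_congr rfl h1, ← Finset.mul_sum]
  -- the key rational-function identity
  have hstar := star n (fun j => (z j x) ^ 2) (fun j k h => hdistsq x hx j k h) ham ℓ
  have hstar' : deriv (z ℓ) x * (∑ m ∈ Finset.Icc 1 n, 1 / ((m : ℝ) ^ 2 - (z ℓ x) ^ 2))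
      - deriv (z ℓ) x * (∑ j ∈ Finset.univ.erase ℓ, 1 / ((z j x) ^ 2 - (z ℓ x) ^ 2))
      - ∑ j ∈ Finset.univ.erase ℓ, deriv (z j) x / ((z j x) ^ 2 - (z ℓ x) ^ 2) = 1 := by
    have h3 : ∑ j ∈ Finset.univ.erase ℓ, deriv (z j) x / ((z j x) ^ 2 - (z ℓ x) ^ 2)
        = ∑ j ∈ Finset.univ.erase ℓ,
            ((∏ m ∈ Finset.Icc 1 n, ((m : ℝ) ^ 2 - (z j x) ^ 2))
              / (∏ k ∈ Finset.univ.erase j, ((z k x) ^ 2 - (z j x) ^ 2)))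
              / ((z j x) ^ 2 - (z ℓ x) ^ 2) :=
      Finset.sum_congr rfl fun j _ => by rw [hode x hx j]
    rw [hode x hx ℓ, h3]
    exact hstar
  -- final computation
  rw [hd2, hF', hG']
  have hL : (((∏ m ∈ Finset.Icc 1 n, ((m : ℝ) ^ 2 - (z ℓ x) ^ 2))
        * (∑ m ∈ Finset.Icc 1 n, 1 / ((m : ℝ) ^ 2 - (z ℓ x) ^ 2))
        * -(2 * z ℓ x * deriv (z ℓ) x))
        * (∏ k ∈ Finset.univ.erase ℓ, ((z k x) ^ 2 - (z ℓ x) ^ 2))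
       - (∏ m ∈ Finset.Icc 1 n, ((m : ℝ) ^ 2 - (z ℓ x) ^ 2))
        * ((∏ k ∈ Finset.univ.erase ℓ, ((z k x) ^ 2 - (z ℓ x) ^ 2))
          * (∑ j ∈ Finset.univ.erase ℓ,
              (2 * z j x * deriv (z j) x - 2 * z ℓ x * deriv (z ℓ) x)
                / ((z j x) ^ 2 - (z ℓ x) ^ 2))))
      / (∏ k ∈ Finset.univ.erase ℓ, ((z k x) ^ 2 - (z ℓ x) ^ 2)) ^ 2
      = deriv (z ℓ) x * (∑ m ∈ Finset.Icc 1 n, 1 / ((m : ℝ) ^ 2 - (z ℓ x) ^ 2))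
          * -(2 * z ℓ x * deriv (z ℓ) x)
        - deriv (z ℓ) x * (∑ j ∈ Finset.univ.erase ℓ,
            (2 * z j x * deriv (z j) x - 2 * z ℓ x * deriv (z ℓ) x)
              / ((z j x) ^ 2 - (z ℓ x) ^ 2)) := by
    rw [hode x hx ℓ]
    field_simp
  rw [hL]
  have hS1 : deriv (z ℓ) x * (∑ m ∈ Finset.Icc 1 n, 1 / ((m : ℝ) ^ 2 - (z ℓ x) ^ 2))
      = 1 + deriv (z ℓ) x * (∑ j ∈ Finset.univ.erase ℓ, 1 / ((z j x) ^ 2 - (z ℓ x) ^ 2))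
        + ∑ j ∈ Finset.univ.erase ℓ, deriv (z j) x / ((z j x) ^ 2 - (z ℓ x) ^ 2) := by
    linarith [hstar']
  rw [hS1]
  have hsum : ∑ j ∈ Finset.univ.erase ℓ, 2 * deriv (z ℓ) x * deriv (z j) x / (z ℓ x - z j x)
      = ∑ j ∈ Finset.univ.erase ℓ,
          ((-(2 * z ℓ x * deriv (z ℓ) x) * deriv (z ℓ) x) * (1 / ((z j x) ^ 2 - (z ℓ x) ^ 2))
           + -(2 * z ℓ x * deriv (z ℓ) x) * (deriv (z j) x / ((z j x) ^ 2 - (z ℓ x) ^ 2))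
           - deriv (z ℓ) x * ((2 * z j x * deriv (z j) x - 2 * z ℓ x * deriv (z ℓ) x)
              / ((z j x) ^ 2 - (z ℓ x) ^ 2))) := by
    refine Finset.sum_congr rfl fun j hj => ?_
    have hne : j ≠ ℓ := (Finset.mem_erase.mp hj).1
    have hS : (z j x) ^ 2 - (z ℓ x) ^ 2 ≠ 0 := hsne j ℓ hne
    have h3 : z ℓ x - z j x ≠ 0 := sub_ne_zero_of_ne (hdist x hx ℓ j (Ne.symm hne))
    field_simp
    ring
  rw [hsum, Finset.sum_sub_distrib, Finset.sum_add_distrib, ← Finset.mul_sum, ← Finset.mul_sum,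
    ← Finset.mul_sum]
  ring
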